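/- Let p be an odd prime, let G = 𝒢_{Ã₂}(p), and let e ≥ 3 be an integer. Then there exists a surjective group homomorphism from G onto SL₃(𝔽_{p^e}), where 𝔽_{p^e} is the finite field with p^e elements. Moreover G has an infinite pro-p completion: for every natural number n there exist a finite p-group Q of cardinality greater than n and a surjective group homomorphism from G onto Q. -/

import Mathlib

/-- The commutator [x,y] = x⁻¹y⁻¹xy (the convention used in the paper). -/
def pc {G : Type*} [Group G] (x y : G) : G := x⁻¹ * y⁻¹ * x * y

/-- The relators of the Kac–Moody–Steinberg group 𝒢_{Ã₂}(p):
a^p, b^p, c^p, [a,b,a], [a,b,b], [b,c,b], [b,c,c], [a,c,a], [a,c,c]. -/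
def kmsA2Rels (p : ℕ) : Set (FreeGroup (Fin 3)) :=
  let a : FreeGroup (Fin 3) := FreeGroup.of 0
  let b : FreeGroup (Fin 3) := FreeGroup.of 1
  let c : FreeGroup (Fin 3) := FreeGroup.of 2
  {a ^ p, b ^ p, c ^ p,
   pc (pc a b) a, pc (pc a b) b,
   pc (pc b c) b, pc (pc b c) c,
   pc (pc a c) a, pc (pc a c) c}

/-- The Kac–Moody–Steinberg group 𝒢_{Ã₂}(p). -/
abbrev KMSA2 (p : ℕ) : Type := PresentedGroup (kmsA2Rels p)

namespace KMSaux
open Matrix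


theorem pc_eq_of {G : Type*} [Group G] {x y z : G} (h : x * y = y * x * z) : pc x y = z := by
  have h2 : pc x y = (y * x)⁻¹ * (x * y) := by simp [pc, mul_assoc]
  rw [h2, h]
  group

theorem pc_of_commute {G : Type*} [Group G] {x y : G} (h : Commute x y) : pc x y = 1 :=
  pc_eq_of (by rw [h.eq, mul_one])

theorem map_pc {G H : Type*} [Group G] [Group H] (φ : G →* H) (x y : G) :
    φ (pc x y) = pc (φ x) (φ y) := by simp [pc]

theorem pc_mem {G : Type*} [Group G] {H : Subgroup G} {x y : G}
    (hx : x ∈ H) (hy : y ∈ H) : pc x y ∈ H :=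
  H.mul_mem (H.mul_mem (H.mul_mem (H.inv_mem hx) (H.inv_mem hy)) hx) hy

section Matrices

variable {n : Type*} [DecidableEq n] [Fintype n] {R : Type*} [CommRing R]

theorem transvection_mul_of_ne {i j k l : n} (hjk : j ≠ k) (u v : R) :
    transvection i j u * transvection k l v =
      1 + Matrix.single i j u + Matrix.single k l v := by
  simp only [transvection, add_mul, mul_add, one_mul, mul_one,
    Matrix.single_mul_single_of_ne _ _ _ _ hjk]
  abel

theorem transvection_commute {i j k l : n} (hjk : j ≠ k) (hli : l ≠ i) (u v : R) :
    Commute (transvection i j u) (transvection k l v) := by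
  unfold Commute SemiconjBy
  rw [transvection_mul_of_ne hjk, transvection_mul_of_ne hli]
  abel

theorem transvection_mul_comm_same {i j k : n} (hij : i ≠ j) (hjk : j ≠ k) (hik : i ≠ k)
    (u v : R) :
    transvection i j u * transvection j k v =
      transvection j k v * (transvection i j u * transvection i k (u * v)) := by
  have h1 : transvection i j u * transvection i k (u * v)
      = 1 + Matrix.single i j u + Matrix.single i k (u * v) :=
    transvection_mul_of_ne (fun h => hij h.symm) _ _
  rw [h1]
  simp only [transvection, add_mul, mul_add, one_mul, mul_one,
    Matrix.single_mul_single_same, Matrix.single_mul_single_of_ne _ _ _ _ hjk.symm,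
    Matrix.single_mul_single_of_ne _ _ _ _ (show (k : n) ≠ i from fun h => hik h.symm),
    Matrix.single_mul_single_of_ne _ _ _ _ (show (k : n) ≠ j from hjk.symm)]
  abel

theorem transvection_mul_comm_opp {i j k : n} (hij : i ≠ j) (hjk : j ≠ k) (hik : i ≠ k)
    (u v : R) :
    transvection i j u * transvection k i v =
      transvection k i v * (transvection i j u * transvection k j (-(v * u))) := by
  have h1 : transvection i j u * transvection k j (-(v * u))
      = 1 + Matrix.single i j u + Matrix.single k j (-(v * u)) :=
    transvection_mul_of_ne hjk _ _
  rw [h1]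
  simp only [transvection, add_mul, mul_add, one_mul, mul_one,
    Matrix.single_mul_single_same, Matrix.single_mul_single_of_ne _ _ _ _ hjk,
    Matrix.single_mul_single_of_ne _ _ _ _ (show (i : n) ≠ k from hik),
    Matrix.single_mul_single_of_ne _ _ _ _ (show (j : n) ≠ k from hjk)]
  have h3 : Matrix.single k j (-(v * u)) = - Matrix.single k j (v * u) := by
    rw [← neg_one_smul R (Matrix.single k j (v * u)), smul_single, neg_one_smul]
  rw [h3]
  abel

theorem transvection_pow {i j : n} (hij : i ≠ j) (u : R) (m : ℕ) :
    transvection i j u ^ m = transvection i j (m • u) := by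
  induction m with
  | zero => simp
  | succ m ih =>
      rw [pow_succ, ih, transvection_mul_transvection_same _ _ hij, succ_nsmul]

end Matrices

section SL

variable {R : Type*} [CommRing R]

abbrev SL3 (R : Type*) [CommRing R] := Matrix.SpecialLinearGroup (Fin 3) R

/-- Elementary transvection as an element of `SL₃`. -/
def SLE (i j : Fin 3) (h : i ≠ j) (u : R) : SL3 R :=
  ⟨transvection i j u, det_transvection_of_ne i j h u⟩

@[simp] theorem SLE_coe {i j : Fin 3} (h : i ≠ j) (u : R) :
    ((SLE i j h u : SL3 R) : Matrix (Fin 3) (Fin 3) R) = transvection i j u := rfl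

theorem SLE_zero {i j : Fin 3} (h : i ≠ j) : (SLE i j h (0 : R)) = 1 :=
  Subtype.ext (by simp)

theorem SLE_mul {i j : Fin 3} (h : i ≠ j) (u v : R) :
    SLE i j h u * SLE i j h v = SLE i j h (u + v) :=
  Subtype.ext (transvection_mul_transvection_same _ _ h u v)

theorem SLE_pow {i j : Fin 3} (h : i ≠ j) (u : R) (m : ℕ) :
    SLE i j h u ^ m = SLE i j h (m • u) :=
  Subtype.ext (by
    rw [Matrix.SpecialLinearGroup.coe_pow]
    exact transvection_pow h u m)

theorem SLE_commute {i j k l : Fin 3} (hij : i ≠ j) (hkl : k ≠ l)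
    (hjk : j ≠ k) (hli : l ≠ i) (u v : R) :
    Commute (SLE i j hij u) (SLE k l hkl v) :=
  Subtype.ext (transvection_commute hjk hli u v)

theorem pc_SLE_same {i j k : Fin 3} (hij : i ≠ j) (hjk : j ≠ k) (hik : i ≠ k) (u v : R) :
    pc (SLE i j hij u) (SLE j k hjk v) = SLE i k hik (u * v) :=
  pc_eq_of (Subtype.ext (by
    simp only [Matrix.SpecialLinearGroup.coe_mul, SLE_coe]
    rw [mul_assoc]
    exact transvection_mul_comm_same hij hjk hik u v))

theorem pc_SLE_opp {i j k : Fin 3} (hij : i ≠ j) (hjk : j ≠ k) (hik : i ≠ k)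
    (hki : k ≠ i) (hkj : k ≠ j) (u v : R) :
    pc (SLE i j hij u) (SLE k i hki v) = SLE k j hkj (-(v * u)) :=
  pc_eq_of (Subtype.ext (by
    simp only [Matrix.SpecialLinearGroup.coe_mul, SLE_coe]
    rw [mul_assoc]
    exact transvection_mul_comm_opp hij hjk hik u v))

theorem f01 : (0:Fin 3) ≠ 1 := by decide
theorem f10 : (1:Fin 3) ≠ 0 := by decide
theorem f12 : (1:Fin 3) ≠ 2 := by decide
theorem f21 : (2:Fin 3) ≠ 1 := by decide
theorem f02 : (0:Fin 3) ≠ 2 := by decide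
theorem f20 : (2:Fin 3) ≠ 0 := by decide

end SL

section Hom

variable (p : ℕ) [Fact p.Prime] {R : Type*} [CommRing R] [CharP R p]

theorem SLE_pow_p {i j : Fin 3} (h : i ≠ j) (u : R) : SLE i j h u ^ p = 1 := by
  rw [SLE_pow, nsmul_eq_mul, CharP.cast_eq_zero R p, zero_mul, SLE_zero]

def genMap (α β γ : R) : Fin 3 → SL3 R :=
  ![SLE 0 1 f01 α, SLE 1 2 f12 β, SLE 2 0 f20 γ]

theorem rels_hold (α β γ : R) : ∀ r ∈ kmsA2Rels p, FreeGroup.lift (genMap α β γ) r = 1 := by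
  intro r hr
  simp only [kmsA2Rels, Set.mem_insert_iff, Set.mem_singleton_iff] at hr
  have e0 : genMap α β γ 0 = SLE 0 1 f01 α := rfl
  have e1 : genMap α β γ 1 = SLE 1 2 f12 β := rfl
  have e2 : genMap α β γ 2 = SLE 2 0 f20 γ := rfl
  rcases hr with rfl|rfl|rfl|rfl|rfl|rfl|rfl|rfl|rfl <;>
    simp only [map_pow, map_pc, FreeGroup.lift_apply_of, e0, e1, e2]
  · exact SLE_pow_p p f01 α
  · exact SLE_pow_p p f12 β
  · exact SLE_pow_p p f20 γ
  · rw [pc_SLE_same f01 f12 f02]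
    exact pc_of_commute (SLE_commute f02 f01 f20 f10 _ _)
  · rw [pc_SLE_same f01 f12 f02]
    exact pc_of_commute (SLE_commute f02 f12 f21 f20 _ _)
  · rw [pc_SLE_same f12 f20 f10]
    exact pc_of_commute (SLE_commute f10 f12 f01 f21 _ _)
  · rw [pc_SLE_same f12 f20 f10]
    exact pc_of_commute (SLE_commute f10 f20 f02 f01 _ _)
  · rw [pc_SLE_opp f01 f12 f02 f20 f21]
    exact pc_of_commute (SLE_commute f21 f01 f10 f12 _ _)
  · rw [pc_SLE_opp f01 f12 f02 f20 f21]
    exact pc_of_commute (SLE_commute f21 f20 f12 f02 _ _)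

/-- The homomorphism `KMSA2 p →* SL₃(R)` sending the generators to the elementary
transvections with parameters `α, β, γ` at positions `(0,1), (1,2), (2,0)`. -/
def kmsHom (α β γ : R) : KMSA2 p →* SL3 R := PresentedGroup.toGroup (rels_hold p α β γ)

@[simp] theorem kmsHom_a (α β γ : R) :
    kmsHom p α β γ (PresentedGroup.of 0) = SLE 0 1 f01 α := PresentedGroup.toGroup.of _
@[simp] theorem kmsHom_b (α β γ : R) :
    kmsHom p α β γ (PresentedGroup.of 1) = SLE 1 2 f12 β := PresentedGroup.toGroup.of _
@[simp] theorem kmsHom_c (α β γ : R) :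
    kmsHom p α β γ (PresentedGroup.of 2) = SLE 2 0 f20 γ := PresentedGroup.toGroup.of _

end Hom

section Surj

variable (p : ℕ) [Fact p.Prime] {K : Type*} [Field K] [Finite K] [CharP K p]

theorem t01 (u : K) : transvection (0:Fin 3) 1 u = !![1,u,0;0,1,0;0,0,1] := by
  ext i j
  fin_cases i <;> fin_cases j <;>
    simp [transvection, Matrix.single, Matrix.one_apply, Matrix.vecHead, Matrix.vecTail]

theorem t10 (u : K) : transvection (1:Fin 3) 0 u = !![1,0,0;u,1,0;0,0,1] := by
  ext i j
  fin_cases i <;> fin_cases j <;>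
    simp [transvection, Matrix.single, Matrix.one_apply, Matrix.vecHead, Matrix.vecTail]

theorem t12 (u : K) : transvection (1:Fin 3) 2 u = !![1,0,0;0,1,u;0,0,1] := by
  ext i j
  fin_cases i <;> fin_cases j <;>
    simp [transvection, Matrix.single, Matrix.one_apply, Matrix.vecHead, Matrix.vecTail]

theorem t21 (u : K) : transvection (2:Fin 3) 1 u = !![1,0,0;0,1,0;0,u,1] := by
  ext i j
  fin_cases i <;> fin_cases j <;>
    simp [transvection, Matrix.single, Matrix.one_apply, Matrix.vecHead, Matrix.vecTail]

theorem diagIdent1 (u : K) (hu : u ≠ 0) :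
    transvection (0 : Fin 3) 1 u * transvection 1 0 (-u⁻¹) * transvection 0 1 u *
      transvection 0 1 (-1) * transvection 1 0 1 * transvection 0 1 (-1) =
      (diagonal ![u, u⁻¹, 1] : Matrix (Fin 3) (Fin 3) K) := by
  simp only [t01, t10]
  rw [Matrix.mul_fin_three, Matrix.mul_fin_three, Matrix.mul_fin_three, Matrix.mul_fin_three,
    Matrix.mul_fin_three]
  have hd : (diagonal ![u, u⁻¹, 1] : Matrix (Fin 3) (Fin 3) K) = !![u,0,0;0,u⁻¹,0;0,0,1] := by
    ext i j
    fin_cases i <;> fin_cases j <;> simp [diagonal, Matrix.vecHead, Matrix.vecTail]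
  rw [hd]
  ext i j
  fin_cases i <;> fin_cases j <;> simp [hu]

theorem diagIdent2 (u : K) (hu : u ≠ 0) :
    transvection (1 : Fin 3) 2 u * transvection 2 1 (-u⁻¹) * transvection 1 2 u *
      transvection 1 2 (-1) * transvection 2 1 1 * transvection 1 2 (-1) =
      (diagonal ![1, u, u⁻¹] : Matrix (Fin 3) (Fin 3) K) := by
  simp only [t12, t21]
  rw [Matrix.mul_fin_three, Matrix.mul_fin_three, Matrix.mul_fin_three, Matrix.mul_fin_three,
    Matrix.mul_fin_three]
  have hd : (diagonal ![1, u, u⁻¹] : Matrix (Fin 3) (Fin 3) K) = !![1,0,0;0,u,0;0,0,u⁻¹] := by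
    ext i j
    fin_cases i <;> fin_cases j <;> simp [diagonal, Matrix.vecHead, Matrix.vecTail]
  rw [hd]
  ext i j
  fin_cases i <;> fin_cases j <;> simp [hu]

theorem kms_surj : ∃ f : KMSA2 p →* SL3 K, Function.Surjective f := by
  obtain ⟨ζ, hζ⟩ := IsCyclic.exists_generator (α := Kˣ)
  set ξ : K := (ζ : K) with hξ
  refine ⟨kmsHom p 1 1 ξ, ?_⟩
  rw [← MonoidHom.range_eq_top, Subgroup.eq_top_iff']
  set H := (kmsHom p 1 1 ξ).range with hH
  have hpc : ∀ {x y : SL3 K}, x ∈ H → y ∈ H → pc x y ∈ H := fun hx hy => pc_mem hx hy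
  -- base elements
  have hA : SLE 0 1 f01 (1 : K) ∈ H := ⟨PresentedGroup.of 0, kmsHom_a p 1 1 ξ⟩
  have hB : SLE 1 2 f12 (1 : K) ∈ H := ⟨PresentedGroup.of 1, kmsHom_b p 1 1 ξ⟩
  have hC : SLE 2 0 f20 ξ ∈ H := ⟨PresentedGroup.of 2, kmsHom_c p 1 1 ξ⟩
  have hAC : SLE 0 2 f02 (1 : K) ∈ H := by
    have := hpc hA hB
    rwa [pc_SLE_same f01 f12 f02, one_mul] at this
  have hBA : SLE 1 0 f10 ξ ∈ H := by
    have := hpc hB hC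
    rwa [pc_SLE_same f12 f20 f10, one_mul] at this
  have hCB : SLE 2 1 f21 ξ ∈ H := by
    have := hpc hC hA
    rwa [pc_SLE_same f20 f01 f21, mul_one] at this
  have hC2 : SLE 2 0 f20 (ξ * ξ) ∈ H := by
    have := hpc hCB hBA
    rwa [pc_SLE_same f21 f10 f20] at this
  -- the inductive claim
  have key : ∀ m : ℕ,
      SLE 0 1 f01 (ξ ^ m) ∈ H ∧ SLE 1 2 f12 (ξ ^ m) ∈ H ∧ SLE 0 2 f02 (ξ ^ m) ∈ H ∧
      SLE 1 0 f10 (ξ ^ (m + 1)) ∈ H ∧ SLE 2 1 f21 (ξ ^ (m + 1)) ∈ H ∧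
      SLE 2 0 f20 (ξ ^ (m + 2)) ∈ H := by
    intro m
    induction m with
    | zero =>
        refine ⟨by rwa [pow_zero], by rwa [pow_zero], by rwa [pow_zero],
          by rwa [pow_one], by rwa [pow_one], by rwa [show ξ ^ 2 = ξ * ξ from sq ξ]⟩
    | succ m ih =>
        obtain ⟨h01m, h12m, h02m, h10m, h21m, h20m⟩ := ih
        have n01 : SLE 0 1 f01 (ξ ^ (m + 1)) ∈ H := by
          have := hpc h02m hCB
          rwa [pc_SLE_same f02 f21 f01, ← pow_succ] at this
        have n12 : SLE 1 2 f12 (ξ ^ (m + 1)) ∈ H := by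
          have := hpc h10m hAC
          rwa [pc_SLE_same f10 f02 f12, mul_one] at this
        have n02 : SLE 0 2 f02 (ξ ^ (m + 1)) ∈ H := by
          have := hpc n01 hB
          rwa [pc_SLE_same f01 f12 f02, mul_one] at this
        have n10 : SLE 1 0 f10 (ξ ^ (m + 2)) ∈ H := by
          have := hpc h12m hC2
          rwa [pc_SLE_same f12 f20 f10, show ξ ^ m * (ξ * ξ) = ξ ^ (m + 2) by ring] at this
        have n21 : SLE 2 1 f21 (ξ ^ (m + 2)) ∈ H := by
          have := hpc h20m hA
          rwa [pc_SLE_same f20 f01 f21, mul_one] at this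
        have n20 : SLE 2 0 f20 (ξ ^ (m + 3)) ∈ H := by
          have := hpc n21 hBA
          rwa [pc_SLE_same f21 f10 f20, ← pow_succ] at this
        exact ⟨n01, n12, n02, n10, n21, n20⟩
  -- representing nonzero field elements as powers of ξ with large exponents
  have hrep : ∀ (x : K), x ≠ 0 → ∀ s : ℕ, ∃ m : ℕ, x = ξ ^ (m + s) := by
    intro x hx s
    obtain ⟨m0, hm0⟩ := (isOfFinOrder_of_finite ζ).mem_powers_iff_mem_zpowers.mpr
      (hζ (Units.mk0 x hx))
    have hd : 0 < orderOf ζ := (isOfFinOrder_of_finite ζ).orderOf_pos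
    refine ⟨m0 + s * orderOf ζ - s, ?_⟩
    have hms : s ≤ s * orderOf ζ := Nat.le_mul_of_pos_right s hd
    have hexp : m0 + s * orderOf ζ - s + s = m0 + s * orderOf ζ := by omega
    rw [hexp]
    have : ζ ^ (m0 + s * orderOf ζ) = Units.mk0 x hx := by
      rw [pow_add, pow_mul', pow_orderOf_eq_one, one_pow, mul_one]
      exact hm0
    calc x = ((Units.mk0 x hx : Kˣ) : K) := rfl
    _ = ((ζ ^ (m0 + s * orderOf ζ) : Kˣ) : K) := by rw [this]
    _ = ξ ^ (m0 + s * orderOf ζ) := by rw [Units.val_pow_eq_pow_val]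
  -- all transvections lie in the range
  have htrans : ∀ (i j : Fin 3) (hij : i ≠ j) (x : K), SLE i j hij x ∈ H := by
    intro i j hij x
    rcases eq_or_ne x 0 with rfl | hx
    · rw [SLE_zero]
      exact H.one_mem
    · fin_cases i <;> fin_cases j <;> first
        | exact absurd rfl hij
        | (obtain ⟨m, rfl⟩ := hrep x hx 0; exact (key (m + 0)).1)
        | skip
      · obtain ⟨m, rfl⟩ := hrep x hx 0
        exact (key (m + 0)).2.2.1
      · obtain ⟨m, rfl⟩ := hrep x hx 1
        exact (key m).2.2.2.1
      · obtain ⟨m, rfl⟩ := hrep x hx 0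
        exact (key (m + 0)).2.1
      · obtain ⟨m, rfl⟩ := hrep x hx 2
        exact (key m).2.2.2.2.2
      · obtain ⟨m, rfl⟩ := hrep x hx 1
        exact (key m).2.2.2.2.1
  -- diagonal matrices of determinant 1 lie in the range
  have hdiag1 : ∀ u : K, u ≠ 0 → ∃ S : SL3 K, S ∈ H ∧
      (S : Matrix (Fin 3) (Fin 3) K) = diagonal ![u, u⁻¹, 1] := by
    intro u hu
    refine ⟨SLE 0 1 f01 u * SLE 1 0 f10 (-u⁻¹) * SLE 0 1 f01 u * SLE 0 1 f01 (-1) *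
      SLE 1 0 f10 1 * SLE 0 1 f01 (-1), ?_, ?_⟩
    · exact H.mul_mem (H.mul_mem (H.mul_mem (H.mul_mem (H.mul_mem
        (htrans _ _ _ _) (htrans _ _ _ _)) (htrans _ _ _ _)) (htrans _ _ _ _))
        (htrans _ _ _ _)) (htrans _ _ _ _)
    · simp only [Matrix.SpecialLinearGroup.coe_mul, SLE_coe]
      exact diagIdent1 u hu
  have hdiag2 : ∀ u : K, u ≠ 0 → ∃ S : SL3 K, S ∈ H ∧
      (S : Matrix (Fin 3) (Fin 3) K) = diagonal ![1, u, u⁻¹] := by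
    intro u hu
    refine ⟨SLE 1 2 f12 u * SLE 2 1 f21 (-u⁻¹) * SLE 1 2 f12 u * SLE 1 2 f12 (-1) *
      SLE 2 1 f21 1 * SLE 1 2 f12 (-1), ?_, ?_⟩
    · exact H.mul_mem (H.mul_mem (H.mul_mem (H.mul_mem (H.mul_mem
        (htrans _ _ _ _) (htrans _ _ _ _)) (htrans _ _ _ _)) (htrans _ _ _ _))
        (htrans _ _ _ _)) (htrans _ _ _ _)
    · simp only [Matrix.SpecialLinearGroup.coe_mul, SLE_coe]
      exact diagIdent2 u hu
  have hdiag : ∀ (D : Fin 3 → K) (S : SL3 K),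
      (S : Matrix (Fin 3) (Fin 3) K) = diagonal D → S ∈ H := by
    intro D S hS
    have hdet : (diagonal D).det = 1 := by rw [← hS]; exact S.2
    rw [det_diagonal, Fin.prod_univ_three] at hdet
    have hD0 : D 0 ≠ 0 := by
      intro h
      rw [h, zero_mul, zero_mul] at hdet
      exact zero_ne_one hdet
    have hD01 : D 0 * D 1 ≠ 0 := by
      intro h
      rw [h, zero_mul] at hdet
      exact zero_ne_one hdet
    obtain ⟨S1, hS1, hS1v⟩ := hdiag1 (D 0) hD0
    obtain ⟨S2, hS2, hS2v⟩ := hdiag2 (D 0 * D 1) hD01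
    have hval : (S : Matrix (Fin 3) (Fin 3) K)
        = (S1 : Matrix (Fin 3) (Fin 3) K) * (S2 : Matrix (Fin 3) (Fin 3) K) := by
      rw [hS, hS1v, hS2v, diagonal_mul_diagonal]
      have hD2 : D 2 = (D 0 * D 1)⁻¹ :=
        eq_inv_of_mul_eq_one_right (by linear_combination hdet)
      ext i j
      rcases eq_or_ne i j with rfl | hne
      · rw [diagonal_apply_eq, diagonal_apply_eq]
        fin_cases i
        · simp
        · simp
          rw [← mul_assoc, inv_mul_cancel₀ hD0, one_mul]
        · simp [hD2]
      · rw [diagonal_apply_ne _ hne, diagonal_apply_ne _ hne]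
    have : S = S1 * S2 := Subtype.ext (by
      rw [Matrix.SpecialLinearGroup.coe_mul]; exact hval)
    rw [this]
    exact H.mul_mem hS1 hS2
  -- products of transvection lists lie in the range
  have hlist : ∀ L : List (TransvectionStruct (Fin 3) K), ∃ S : SL3 K, S ∈ H ∧
      (S : Matrix (Fin 3) (Fin 3) K) = (L.map TransvectionStruct.toMatrix).prod := by
    intro L
    induction L with
    | nil => exact ⟨1, H.one_mem, by simp⟩
    | cons t L ih =>
        obtain ⟨S, hS, hSv⟩ := ih
        refine ⟨SLE t.i t.j t.hij t.c * S, H.mul_mem (htrans _ _ _ _) hS, ?_⟩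
        rw [Matrix.SpecialLinearGroup.coe_mul, hSv, List.map_cons, List.prod_cons]
        rfl
  -- conclusion
  intro M
  obtain ⟨L, L', D, hM⟩ :=
    Matrix.Pivot.exists_list_transvec_mul_diagonal_mul_list_transvec (M : Matrix (Fin 3) (Fin 3) K)
  obtain ⟨S1, hS1, hS1v⟩ := hlist L
  obtain ⟨S2, hS2, hS2v⟩ := hlist L'
  have hdetD : (diagonal D).det = 1 := by
    have h1 : ((M : Matrix (Fin 3) (Fin 3) K)).det = 1 := M.2
    rw [hM, det_mul, det_mul, TransvectionStruct.det_toMatrix_prod,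
      TransvectionStruct.det_toMatrix_prod, one_mul, mul_one] at h1
    exact h1
  have hSD : (⟨diagonal D, hdetD⟩ : SL3 K) ∈ H := hdiag D _ rfl
  have : M = S1 * ⟨diagonal D, hdetD⟩ * S2 := by
    apply Subtype.ext
    show (M : Matrix (Fin 3) (Fin 3) K) = (S1 : Matrix (Fin 3) (Fin 3) K) * diagonal D * (S2 : Matrix (Fin 3) (Fin 3) K)
    rw [hS1v, hS2v, hM]
  rw [this]
  exact H.mul_mem (H.mul_mem hS1 hSD) hS2

end Surj

section ProP

open Polynomial AdjoinRoot

variable {R : Type*} [CommRing R]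

theorem SLE_list_prod {i j : Fin 3} (h : i ≠ j) :
    ∀ (m : ℕ) (g : Fin m → R),
      (List.ofFn (fun x => SLE i j h (g x))).prod = SLE i j h (∑ x, g x)
  | 0, g => by simp [SLE_zero]
  | m + 1, g => by
      rw [List.ofFn_succ, List.prod_cons, SLE_list_prod h m (fun x => g x.succ), SLE_mul,
        Fin.sum_univ_succ]

theorem transvection_map {S : Type*} [CommRing S] (π : R →+* S) (i j : Fin 3) (u : R) :
    (transvection i j u).map π = transvection i j (π u) := by
  ext a b
  simp [transvection, Matrix.single, Matrix.map_apply, Matrix.one_apply, Matrix.add_apply,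
    apply_ite π]

theorem kms_pgroup (p : ℕ) [Fact p.Prime] (n : ℕ) :
    ∃ (Q : Type) (_ : Group Q) (_ : Finite Q) (f : KMSA2 p →* Q),
      IsPGroup p Q ∧ Function.Surjective f ∧ n < Nat.card Q := by
  have hp1 : 1 < p := (Fact.out : p.Prime).one_lt
  set k := 3 * n + 3 with hkdef
  have hk : 0 < k := by omega
  set F : (ZMod p)[X] := X ^ k with hF
  have hmon : F.Monic := monic_X_pow k
  set pb := AdjoinRoot.powerBasis' hmon with hpb
  have hdim : pb.dim = k := by
    rw [hpb, AdjoinRoot.powerBasis'_dim, hF, natDegree_X_pow]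
  haveI : Nontrivial (AdjoinRoot F) := by
    refine nontrivial_of_ne (pb.basis ⟨0, by omega⟩) 0 ?_
    exact pb.basis.linearIndependent.ne_zero _
  haveI : CharP (AdjoinRoot F) p :=
    charP_of_injective_algebraMap (algebraMap (ZMod p) (AdjoinRoot F)).injective p
  haveI : Module.Finite (ZMod p) (AdjoinRoot F) := Module.Finite.of_basis pb.basis
  haveI : Finite (AdjoinRoot F) := Module.finite_of_finite (ZMod p)
  set t : AdjoinRoot F := root F with ht
  have htk : t ^ k = 0 := by
    rw [ht, ← AdjoinRoot.mk_X, ← map_pow, ← hF, AdjoinRoot.mk_self]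
  set f₀ := kmsHom p t t t with hf₀
  refine ⟨f₀.range, inferInstance, inferInstance, f₀.rangeRestrict, ?_,
    f₀.rangeRestrict_surjective, ?_⟩
  · -- `f₀.range` is a `p`-group
    set π : AdjoinRoot F →+* ZMod p :=
      AdjoinRoot.lift (RingHom.id (ZMod p)) 0
        (by rw [hF, eval₂_pow, eval₂_X, zero_pow hk.ne']) with hπ
    have hπt : π t = 0 := AdjoinRoot.lift_root _
    have hker : ∀ r : AdjoinRoot F, π r = 0 → ∃ s : AdjoinRoot F, r = t * s := by
      intro r hr
      obtain ⟨g, rfl⟩ := AdjoinRoot.mk_surjective r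
      have hg0 : g.coeff 0 = 0 := by
        have : π (mk F g) = g.eval₂ (RingHom.id (ZMod p)) 0 := AdjoinRoot.lift_mk _ g
        rw [hr] at this
        rw [coeff_zero_eq_eval_zero]
        have h5 : eval 0 g = eval₂ (RingHom.id (ZMod p)) 0 g := rfl
        rw [h5]
        exact this.symm
      refine ⟨mk F g.divX, ?_⟩
      conv_lhs => rw [← Polynomial.X_mul_divX_add g, hg0, Polynomial.C_0, add_zero]
      rw [_root_.map_mul, AdjoinRoot.mk_X, ht]
    have hmapgen : ∀ x : KMSA2 p,
        Matrix.SpecialLinearGroup.map π (f₀ x) = 1 := by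
      have hcomp : (Matrix.SpecialLinearGroup.map (n := Fin 3) π).comp f₀ = 1 := by
        apply PresentedGroup.ext
        intro i
        have hSLE : ∀ (a b : Fin 3) (hab : a ≠ b),
            Matrix.SpecialLinearGroup.map π (SLE a b hab t) = 1 := by
          intro a b hab
          apply Subtype.ext
          show ((SLE a b hab t : Matrix (Fin 3) (Fin 3) (AdjoinRoot F))).map π = _
          rw [SLE_coe, transvection_map, hπt, transvection_zero]
          rfl
        fin_cases i
        · show Matrix.SpecialLinearGroup.map π (f₀ (PresentedGroup.of 0)) = 1
          rw [hf₀, kmsHom_a]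
          exact hSLE _ _ _
        · show Matrix.SpecialLinearGroup.map π (f₀ (PresentedGroup.of 1)) = 1
          rw [hf₀, kmsHom_b]
          exact hSLE _ _ _
        · show Matrix.SpecialLinearGroup.map π (f₀ (PresentedGroup.of 2)) = 1
          rw [hf₀, kmsHom_c]
          exact hSLE _ _ _
      intro x
      have := DFunLike.congr_fun hcomp x
      simpa using this
    have hX : ∀ x : SL3 (AdjoinRoot F), x ∈ f₀.range → x ^ p ^ k = 1 := by
      rintro x ⟨g, rfl⟩
      have hent : ∀ a b : Fin 3, ∃ s : AdjoinRoot F,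
          ((f₀ g : SL3 (AdjoinRoot F)) : Matrix (Fin 3) (Fin 3) (AdjoinRoot F)) a b
            - (1 : Matrix (Fin 3) (Fin 3) (AdjoinRoot F)) a b = t * s := by
        intro a b
        apply hker
        have h1 := congrArg
          (fun M : SL3 (ZMod p) => (M : Matrix (Fin 3) (Fin 3) (ZMod p)) a b) (hmapgen g)
        change ((Matrix.SpecialLinearGroup.map π (f₀ g) : SL3 (ZMod p)) :
          Matrix (Fin 3) (Fin 3) (ZMod p)) a b = ((1 : SL3 (ZMod p)) :
          Matrix (Fin 3) (Fin 3) (ZMod p)) a b at h1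
        have h2 : π (((f₀ g : SL3 (AdjoinRoot F)) :
            Matrix (Fin 3) (Fin 3) (AdjoinRoot F)) a b)
            = (1 : Matrix (Fin 3) (Fin 3) (ZMod p)) a b := by
          rw [Matrix.SpecialLinearGroup.coe_one] at h1
          exact h1
        have h3 : π ((1 : Matrix (Fin 3) (Fin 3) (AdjoinRoot F)) a b)
            = (1 : Matrix (Fin 3) (Fin 3) (ZMod p)) a b := by
          rcases eq_or_ne a b with rfl | hab
          · rw [Matrix.one_apply_eq, Matrix.one_apply_eq, _root_.map_one]
          · rw [Matrix.one_apply_ne hab, Matrix.one_apply_ne hab, map_zero]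
        rw [map_sub, h2, h3, sub_self]
      choose N hN using hent
      have hval : ((f₀ g : SL3 (AdjoinRoot F)) : Matrix (Fin 3) (Fin 3) (AdjoinRoot F))
          = 1 + t • Matrix.of N := by
        ext a b
        have := hN a b
        simp only [Matrix.add_apply, Matrix.smul_apply, Matrix.of_apply, smul_eq_mul]
        linear_combination this
      apply Subtype.ext
      rw [Matrix.SpecialLinearGroup.coe_pow, hval]
      have hbin := add_pow_char_pow_of_commute (p := p) (n := k)
        (Commute.one_left (t • Matrix.of N))
      rw [hbin, one_pow, _root_.smul_pow]
      have hpk : t ^ p ^ k = 0 := by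
        have hkpk : k ≤ p ^ k := le_of_lt (Nat.lt_pow_self (n := k) hp1)
        rw [show p ^ k = k + (p ^ k - k) by omega, pow_add, htk, zero_mul]
      rw [hpk, zero_smul, add_zero]
      rfl
    intro q
    obtain ⟨x, hx⟩ := q
    refine ⟨k, ?_⟩
    apply Subtype.ext
    rw [SubmonoidClass.coe_pow]
    exact hX x hx
  · -- the quotient is large
    -- words mapping to elementary matrices with parameter `t ^ (3 m + 1)` at `(0,1)`
    set P : ℕ → KMSA2 p := fun m => Nat.rec (PresentedGroup.of 0)
      (fun _ prev => pc (pc (PresentedGroup.of 0) (PresentedGroup.of 1))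
        (pc (PresentedGroup.of 2) prev)) m with hPdef
    have hP : ∀ m : ℕ, f₀ (P m) = SLE 0 1 f01 (t ^ (3 * m + 1)) := by
      intro m
      induction m with
      | zero =>
          show f₀ (PresentedGroup.of 0) = _
          rw [hf₀, kmsHom_a]
          norm_num
      | succ m ih =>
          show f₀ (pc (pc (PresentedGroup.of 0) (PresentedGroup.of 1))
            (pc (PresentedGroup.of 2) (P m))) = _
          rw [map_pc, map_pc, map_pc, ih, hf₀, kmsHom_a, kmsHom_b, kmsHom_c,
            pc_SLE_same f01 f12 f02, pc_SLE_same f20 f01 f21,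
            pc_SLE_same f02 f21 f01]
          congr 1
          rw [show 3 * (m + 1) + 1 = (3 * m + 1) + 3 by ring]
          ring
    set w : ℕ → KMSA2 p := fun m => pc (P m) (PresentedGroup.of 1) with hwdef
    have hw : ∀ m : ℕ, f₀ (w m) = SLE 0 2 f02 (t ^ (3 * m + 2)) := by
      intro m
      rw [hwdef]
      simp only
      rw [map_pc, hP, hf₀, kmsHom_b, pc_SLE_same f01 f12 f02, ← pow_succ]
    -- the injection
    set ψ0 : (Fin (n + 1) → ZMod p) → KMSA2 p :=
      fun v => (List.ofFn (fun j : Fin (n + 1) => (w j) ^ (v j).val)).prod with hψ0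
    have hψval : ∀ v : Fin (n + 1) → ZMod p,
        f₀ (ψ0 v) = SLE 0 2 f02 (∑ j : Fin (n + 1), (v j).val • t ^ (3 * (j : ℕ) + 2)) := by
      intro v
      rw [hψ0]
      simp only
      rw [map_list_prod, List.map_ofFn]
      have hfn : (f₀ ∘ fun j : Fin (n + 1) => w j ^ (v j).val)
          = fun j : Fin (n + 1) => SLE 0 2 f02 ((v j).val • t ^ (3 * (j : ℕ) + 2)) := by
        funext j
        simp only [Function.comp_apply]
        rw [map_pow, hw, SLE_pow]
      rw [hfn, SLE_list_prod]
    have hτ : ∀ j : Fin (n + 1), 3 * (j : ℕ) + 2 < pb.dim := by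
      intro j
      have := j.2
      omega
    have hinj : Function.Injective
        (fun v : Fin (n + 1) → ZMod p => f₀.rangeRestrict (ψ0 v)) := by
      intro v v' hvv
      have h1 : f₀ (ψ0 v) = f₀ (ψ0 v') := Subtype.ext_iff.mp hvv
      rw [hψval, hψval] at h1
      have h2 : (∑ j : Fin (n + 1), (v j).val • t ^ (3 * (j : ℕ) + 2))
          = ∑ j : Fin (n + 1), (v' j).val • t ^ (3 * (j : ℕ) + 2) := by
        have h3 := congrArg
          (fun S : SL3 (AdjoinRoot F) =>
            (S : Matrix (Fin 3) (Fin 3) (AdjoinRoot F)) 0 2) h1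
        simpa [transvection, Matrix.single, Matrix.one_apply] using h3
      -- switch to `ZMod p`-scalars
      have h4 : (∑ j : Fin (n + 1), v j • pb.basis ⟨3 * (j : ℕ) + 2, hτ j⟩)
          = ∑ j : Fin (n + 1), v' j • pb.basis ⟨3 * (j : ℕ) + 2, hτ j⟩ := by
        have hb : ∀ j : Fin (n + 1),
            pb.basis ⟨3 * (j : ℕ) + 2, hτ j⟩ = t ^ (3 * (j : ℕ) + 2) := by
          intro j
          rw [pb.basis_eq_pow]
          congr 1
        calc (∑ j : Fin (n + 1), v j • pb.basis ⟨3 * (j : ℕ) + 2, hτ j⟩)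
            = ∑ j : Fin (n + 1), (v j).val • t ^ (3 * (j : ℕ) + 2) := by
              refine Finset.sum_congr rfl (fun j _ => ?_)
              rw [hb j, ← Nat.cast_smul_eq_nsmul (ZMod p), ZMod.natCast_val, ZMod.cast_id]
          _ = ∑ j : Fin (n + 1), (v' j).val • t ^ (3 * (j : ℕ) + 2) := h2
          _ = ∑ j : Fin (n + 1), v' j • pb.basis ⟨3 * (j : ℕ) + 2, hτ j⟩ := by
              refine Finset.sum_congr rfl (fun j _ => ?_)
              rw [hb j, ← Nat.cast_smul_eq_nsmul (ZMod p), ZMod.natCast_val, ZMod.cast_id]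
      have hτinj : Function.Injective (fun j : Fin (n + 1) =>
          (⟨3 * (j : ℕ) + 2, hτ j⟩ : Fin pb.dim)) := by
        intro a b hab
        have : 3 * (a : ℕ) + 2 = 3 * (b : ℕ) + 2 := congrArg Fin.val hab
        exact Fin.ext (by omega)
      have hli : LinearIndependent (ZMod p)
          (fun j : Fin (n + 1) => pb.basis ⟨3 * (j : ℕ) + 2, hτ j⟩) :=
        pb.basis.linearIndependent.comp _ hτinj
      have h5 := Fintype.linearIndependent_iff.mp hli (v - v') ?_
      · funext j
        have := h5 j
        simpa [sub_eq_zero] using this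
      · rw [← sub_eq_zero] at h4
        rw [← h4]
        rw [← Finset.sum_sub_distrib]
        refine Finset.sum_congr rfl (fun j _ => ?_)
        simp [sub_smul]
    have hcard : p ^ (n + 1) ≤ Nat.card f₀.range := by
      have := Nat.card_le_card_of_injective _ hinj
      rwa [Nat.card_eq_fintype_card (α := Fin (n + 1) → ZMod p), Fintype.card_fun,
        ZMod.card, Fintype.card_fin] at this
    have hlt : n < p ^ (n + 1) := by
      calc n < 2 ^ n := Nat.lt_two_pow_self
      _ ≤ 2 ^ (n + 1) := Nat.pow_le_pow_right (by norm_num) (by omega)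
      _ ≤ p ^ (n + 1) := Nat.pow_le_pow_left hp1 (n + 1)
    omega

end ProP

end KMSaux

open Matrix in
/-- For an odd prime p and e ≥ 3, the group G = 𝒢_{Ã₂}(p) surjects onto SL₃(𝔽_{p^e}),
and G has an infinite pro-p completion: it has arbitrarily large finite p-group
quotients. -/
theorem kmsA2_quotients (p e : ℕ) [Fact p.Prime] (hodd : Odd p) (he : 3 ≤ e) :
    (∃ f : KMSA2 p →* Matrix.SpecialLinearGroup (Fin 3) (GaloisField p e),
      Function.Surjective f) ∧
    (∀ n : ℕ, ∃ (Q : Type) (_ : Group Q) (_ : Finite Q) (f : KMSA2 p →* Q),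
      IsPGroup p Q ∧ Function.Surjective f ∧ n < Nat.card Q) := by
  constructor
  · haveI : Finite (GaloisField p e) := Module.finite_of_finite (ZMod p)
    exact KMSaux.kms_surj p (K := GaloisField p e)
  · intro n
    exact KMSaux.kms_pgroup p n
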